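/- For each u ∈ {1,...,m}, the set 𝓘_u = span{I_k : k ≠ u, 1 ≤ k ≤ n} is a maximal ideal of A_n^m, and the intersection of all these ideals 𝓘_1 ∩ ... ∩ 𝓘_m equals the radical 𝓡 = span{I_k : m+1 ≤ k ≤ n}. -/

import Mathlib

/-- For each `u < m`, the span `𝓘_u` of `{I_k : k ≠ u}` is a maximal ideal of
`A_n^m`, and the intersection of all of them is the radical
`𝓡 = span{I_k : m ≤ k}`. -/
theorem maximal_ideals_and_radical (n m : ℕ) (hm : m ≤ n) (A : Type*)
    [CommRing A] [Algebra ℂ A]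
    (I : Module.Basis (Fin n) ℂ A)
    (hidem : ∀ r s : Fin n, r.val < m → s.val < m →
      I r * I s = if r = s then I r else 0)
    (Υ : Fin n → Fin n → Fin n → ℂ)
    (hnil : ∀ r s : Fin n, m ≤ r.val → m ≤ s.val →
      I r * I s = ∑ k ∈ Finset.univ.filter (fun k : Fin n => max r.val s.val < k.val),
        Υ r s k • I k)
    (u : Fin n → Fin n)
    (hu : ∀ s : Fin n, m ≤ s.val → (u s).val < m)
    (hmul3 : ∀ s : Fin n, m ≤ s.val → ∀ r : Fin n, r.val < m →
      I r * I s = if r = u s then I s else 0)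
    -- `1 = Σ_{u=1}^m I_u`
    (hone : ∑ w ∈ Finset.univ.filter (fun w : Fin n => w.val < m), I w = 1) :
    (∀ w : Fin n, w.val < m → ∃ J : Ideal A,
        (J : Set A) = (Submodule.span ℂ (I '' {k : Fin n | k ≠ w}) : Set A) ∧ J.IsMaximal)
    ∧ (⨅ w : {w : Fin n // w.val < m},
          Submodule.span ℂ (I '' {k : Fin n | k ≠ (w : Fin n)}))
        = Submodule.span ℂ (I '' {k : Fin n | m ≤ k.val}) := by
  classical
  have hcoord : ∀ (w k : Fin n), I.coord w (I k) = if w = k then 1 else 0 := by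
    intro w k
    simp [Module.Basis.coord_apply, Module.Basis.repr_self, Finsupp.single_apply, eq_comm]
  -- the coordinate functional at `w < m` is multiplicative
  have hmulc : ∀ (w : Fin n), w.val < m → ∀ x y : A,
      I.coord w (x * y) = I.coord w x * I.coord w y := by
    intro w hw
    have key : ((LinearMap.mul ℂ A).compr₂ (I.coord w)) =
        (LinearMap.mul ℂ ℂ).compl₁₂ (I.coord w) (I.coord w) := by
      apply LinearMap.ext_basis I I
      intro i j
      simp only [LinearMap.compr₂_apply, LinearMap.mul_apply', LinearMap.compl₁₂_apply]
      rcases lt_or_ge i.val m with hi | hi <;> rcases lt_or_ge j.val m with hj | hj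
      · rw [hidem i j hi hj]
        by_cases h : i = j
        · subst h
          rw [if_pos rfl, hcoord]
          split_ifs <;> simp
        · rw [if_neg h, map_zero, hcoord, hcoord]
          split_ifs with h1 h2
          · exact absurd (h1 ▸ h2 : i = j) (h1 ▸ h)
          · ring
          · ring
          · ring
      · have hwj : ¬ w = j := fun h => absurd (h ▸ hw) (not_lt.2 hj)
        rw [hmul3 j hj i hi]
        split_ifs with h1
        · simp [hcoord, hwj]
        · simp [hcoord, hwj]
      · have hwi : ¬ w = i := fun h => absurd (h ▸ hw) (not_lt.2 hi)
        rw [mul_comm, hmul3 i hi j hj]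
        split_ifs with h1
        · simp [hcoord, hwi]
        · simp [hcoord, hwi]
      · have hwi : ¬ w = i := fun h => absurd (h ▸ hw) (not_lt.2 hi)
        rw [hnil i j hi hj, map_sum]
        rw [Finset.sum_eq_zero, hcoord w i, if_neg hwi, zero_mul]
        intro k hk
        simp only [Finset.mem_filter] at hk
        have hwk : ¬ w = k := by
          rintro rfl
          have := hk.2
          omega
        rw [map_smul, hcoord, if_neg hwk, smul_zero]
    intro x y
    simpa using LinearMap.congr_fun (LinearMap.congr_fun key x) y
  have honec : ∀ (w : Fin n), w.val < m → I.coord w (1 : A) = 1 := by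
    intro w hw
    rw [← hone, map_sum]
    have h : ∀ k ∈ Finset.univ.filter (fun k : Fin n => k.val < m),
        I.coord w (I k) = if w = k then 1 else 0 := fun k _ => hcoord w k
    rw [Finset.sum_congr rfl h, Finset.sum_ite_eq]
    simp [hw]
  -- membership in the spans via coordinates
  have hmemspan : ∀ (w : Fin n) (x : A),
      x ∈ Submodule.span ℂ (I '' {k : Fin n | k ≠ w}) ↔ I.coord w x = 0 := by
    intro w x
    rw [Module.Basis.mem_span_image]
    constructor
    · intro h
      by_contra hne
      have hw : w ∈ (I.repr x).support := Finsupp.mem_support_iff.mpr (by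
        simpa [Module.Basis.coord_apply] using hne)
      exact (h hw) rfl
    · intro h k hk hkw
      subst hkw
      exact (Finsupp.mem_support_iff.mp hk) (by simpa [Module.Basis.coord_apply] using h)
  constructor
  · intro w hw
    let φ : A →+* ℂ :=
      { toFun := I.coord w
        map_one' := honec w hw
        map_mul' := hmulc w hw
        map_zero' := map_zero _
        map_add' := map_add _ }
    have hsurj : Function.Surjective φ := by
      intro c
      refine ⟨c • I w, ?_⟩
      show I.coord w (c • I w) = c
      rw [map_smul, hcoord]
      simp
    refine ⟨RingHom.ker φ, ?_, RingHom.ker_isMaximal_of_surjective φ hsurj⟩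
    ext x
    simp only [SetLike.mem_coe, RingHom.mem_ker, hmemspan]
    exact Iff.rfl
  · ext x
    simp only [Submodule.mem_iInf, hmemspan, Module.Basis.mem_span_image, Set.subset_def,
      Finset.mem_coe, Finsupp.mem_support_iff, Set.mem_setOf_eq]
    constructor
    · intro h k hk
      by_contra hlt
      push_neg at hlt
      exact hk (by simpa [Module.Basis.coord_apply] using h ⟨k, hlt⟩)
    · intro h w
      by_contra hne
      have hmem : (I.repr x) w.1 ≠ 0 := by simpa [Module.Basis.coord_apply] using hne
      have := h w.1 hmem
      have := w.2
      omega
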